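/- The (M−1)-dimensional statistic T : X → ℝ^{M−1} itself, given by T(x) = (T_1(x), …, T_{M−1}(x)) with T_i(x) = f_i(x)/Σ_{j=1}^M f_j(x), is Bayes sufficient for the model indicator. In particular, for any model choice problem with M models there exists a Bayes sufficient statistic of dimension M−1. -/

import Mathlib

open MeasureTheory

variable {X : Type*} [MeasurableSpace X]

/-- Posterior probability of model `i` given data `x`, under prior `p`:
`Pr_p(M_i | x) = p i * f i x / ∑ j, p j * f j x`. -/
noncomputable def post (M : ℕ) (f : Fin M → X → ℝ) (p : Fin M → ℝ) (i : Fin M) (x : X) : ℝ :=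
  p i * f i x / ∑ j, p j * f j x

/-- Marginal data distribution `μ_p = ∑ i, p i • μ_i` under prior `p`, where `μ_i` has
density `f i` with respect to `ν`. -/
noncomputable def marg (ν : Measure X) (M : ℕ) (f : Fin M → X → ℝ) (p : Fin M → ℝ) :
    Measure X :=
  ∑ i, ENNReal.ofReal (p i) • ν.withDensity (fun x => ENNReal.ofReal (f i x))

/-- The statistic `T(x) = (T_1(x), …, T_{M-1}(x))` with `T_i(x) = f i x / ∑ j, f j x`,
the posterior model probabilities under the uniform prior (first `M - 1` coordinates). -/
noncomputable def Tstat (M : ℕ) (f : Fin M → X → ℝ) (x : X) (i : Fin (M - 1)) : ℝ :=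
  f (Fin.castLE (Nat.sub_le M 1) i) x / ∑ j, f j x

/-- `p` is a prior over the `M` models. -/
def IsPrior (M : ℕ) (p : Fin M → ℝ) : Prop :=
  (∀ i, 0 ≤ p i) ∧ ∑ i, p i = 1

/-- `S` is Bayes sufficient for the model indicator: for every prior `p` and every model `i`,
the conditional expectation of `Pr_p(M_i | ·)` given `σ(S)` under `μ_p` equals
`Pr_p(M_i | ·)` `μ_p`-almost everywhere. -/
noncomputable def BayesSufficient (ν : Measure X) (M : ℕ) (f : Fin M → X → ℝ)
    {Y : Type*} [MeasurableSpace Y] (S : X → Y) : Prop :=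
  ∀ p : Fin M → ℝ, IsPrior M p → ∀ i : Fin M,
    (marg ν M f p)[post M f p i|MeasurableSpace.comap S inferInstance]
      =ᵐ[marg ν M f p] post M f p i

/-- The `(M-1)`-dimensional statistic `T : X → ℝ^{M-1}` itself is Bayes sufficient for the
model indicator: every model choice problem with `M` models admits a Bayes sufficient
statistic of dimension `M - 1`. -/
theorem tstat_bayesSufficient
    (ν : Measure X) [SigmaFinite ν] (M : ℕ) (hM : 2 ≤ M)
    (f : Fin M → X → ℝ) (hf_meas : ∀ i, Measurable (f i))
    (hf_nonneg : ∀ i x, 0 ≤ f i x) (hf_one : ∀ i, ∫ x, f i x ∂ν = 1)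
    (hf_pos : ∀ᵐ x ∂ν, 0 < ∑ j, f j x) :
    BayesSufficient ν M f (Tstat M f) := by
  obtain ⟨n, rfl⟩ : ∃ n, M = n + 1 := ⟨M - 1, by omega⟩
  intro p hp i
  -- integrability of the densities
  have hfi : ∀ i, Integrable (f i) ν := by
    intro i
    by_contra h
    have h1 := hf_one i
    rw [integral_undef h] at h1
    exact one_ne_zero h1.symm
  have hlint : ∀ i, ∫⁻ x, ENNReal.ofReal (f i x) ∂ν = 1 := by
    intro i
    rw [← ofReal_integral_eq_lintegral_ofReal (hfi i) (Filter.Eventually.of_forall (hf_nonneg i)),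
      hf_one i, ENNReal.ofReal_one]
  -- the marginal is a finite measure
  haveI hfin : IsFiniteMeasure (marg ν (n + 1) f p) := by
    constructor
    rw [marg, Measure.finset_sum_apply]
    refine ENNReal.sum_lt_top.mpr fun j _ => ?_
    rw [Measure.smul_apply, smul_eq_mul,
      withDensity_apply _ MeasurableSet.univ, setLIntegral_univ, hlint j, mul_one]
    exact ENNReal.ofReal_lt_top
  -- the marginal is absolutely continuous wrt ν
  have habs : marg ν (n + 1) f p ≪ ν := by
    refine Measure.AbsolutelyContinuous.mk fun s hs hνs => ?_
    rw [marg, Measure.finset_sum_apply]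
    refine Finset.sum_eq_zero fun j _ => ?_
    rw [Measure.smul_apply, smul_eq_mul, withDensity_apply _ hs,
      setLIntegral_measure_zero s _ hνs, mul_zero]
  have hpos : ∀ᵐ x ∂(marg ν (n + 1) f p), 0 < ∑ j, f j x := habs.ae_le hf_pos
  -- the measurable map reconstructing all M posterior probabilities from T
  set ext : (Fin n → ℝ) → Fin (n + 1) → ℝ :=
    fun t j => if h : (j : ℕ) < n then t ⟨j, h⟩ else 1 - ∑ k, t k with hext_def
  have hext_meas : ∀ j, Measurable fun t => ext t j := by
    intro j
    by_cases h : (j : ℕ) < n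
    · simpa [hext_def, h] using measurable_pi_apply (⟨j, h⟩ : Fin n)
    · simpa [hext_def, h] using
        (show Measurable fun t : Fin n → ℝ => 1 - ∑ k, t k from
          measurable_const.sub (Finset.univ.measurable_sum fun k _ => measurable_pi_apply k))
  set φ : (Fin n → ℝ) → ℝ :=
    fun t => p i * ext t i / ∑ j, p j * ext t j with hφ_def
  have hφ_meas : Measurable φ := by
    exact ((measurable_const.mul (hext_meas i)).div
      (Finset.univ.measurable_sum fun j _ => measurable_const.mul (hext_meas j)))
  -- T is measurable
  have hT_meas : Measurable (Tstat (n + 1) f) := by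
    refine measurable_pi_lambda _ fun k => ?_
    exact (hf_meas _).div (Finset.univ.measurable_sum fun j _ => hf_meas j)
  have hm : MeasurableSpace.comap (Tstat (n + 1) f) inferInstance ≤ ‹MeasurableSpace X› :=
    hT_meas.comap_le
  haveI : IsFiniteMeasure ((marg ν (n + 1) f p).trim hm) := isFiniteMeasure_trim hm
  set g : X → ℝ := fun x => φ (Tstat (n + 1) f x) with hg_def
  -- key pointwise identity on the set where the total density is positive
  have hkey : ∀ x, 0 < ∑ j, f j x → ∀ j, ext (Tstat (n + 1) f x) j = f j x / ∑ j, f j x := by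
    intro x hx j
    set S : ℝ := ∑ j, f j x with hSdef
    by_cases h : (j : ℕ) < n
    · have hj : Fin.castLE (Nat.sub_le (n + 1) 1) (⟨j, h⟩ : Fin (n + 1 - 1)) = j := by
        apply Fin.ext; rfl
      simp only [hext_def, h, dif_pos, Tstat, hj]
      rfl
    · have hj : j = Fin.last n := by
        apply Fin.ext
        simp only [Fin.val_last]
        omega
      subst hj
      have hsum : ∑ k : Fin (n + 1 - 1), Tstat (n + 1) f x k
          = (∑ k : Fin n, f (Fin.castSucc k) x) / S := by
        rw [Finset.sum_div]
        refine Finset.sum_congr rfl fun k _ => ?_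
        congr 1
      have hsplit : S = (∑ k : Fin n, f (Fin.castSucc k) x) + f (Fin.last n) x := by
        rw [hSdef, Fin.sum_univ_castSucc]
      rw [show ext (Tstat (n + 1) f x) (Fin.last n)
          = 1 - ∑ k, Tstat (n + 1) f x k from dif_neg (by simp)]
      rw [hsum, eq_div_iff hx.ne', sub_mul, div_mul_cancel₀ _ hx.ne', hsplit]
      ring
    -- done
  have heq : ∀ x, 0 < ∑ j, f j x → post (n + 1) f p i x = g x := by
    intro x hx
    have hS := hx.ne'
    simp only [hg_def, hφ_def, post]
    rw [show (∑ j, p j * ext (Tstat (n + 1) f x) j)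
        = (∑ j, p j * f j x) / ∑ j, f j x by
      rw [Finset.sum_div]
      exact Finset.sum_congr rfl fun j _ => by rw [hkey x hx j, mul_div_assoc]]
    rw [hkey x hx i, ← mul_div_assoc, div_div_div_cancel_right₀ hS]
  have hg_eq : post (n + 1) f p i =ᵐ[marg ν (n + 1) f p] g :=
    hpos.mono fun x hx => heq x hx
  -- g is strongly measurable wrt m
  have hgsm : StronglyMeasurable[MeasurableSpace.comap (Tstat (n + 1) f) inferInstance] g := by
    have : Measurable[MeasurableSpace.comap (Tstat (n + 1) f) inferInstance]
        (Tstat (n + 1) f) := Measurable.of_comap_le le_rfl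
    exact (hφ_meas.comp this).stronglyMeasurable
  -- post is integrable (bounded by 1, finite measure)
  have hpost_meas : Measurable (post (n + 1) f p i) := by
    exact (measurable_const.mul (hf_meas i)).div
      (Finset.univ.measurable_sum fun j _ => measurable_const.mul (hf_meas j))
  have hbdd : ∀ x, ‖post (n + 1) f p i x‖ ≤ (1 : ℝ) := by
    intro x
    have h0 : 0 ≤ ∑ j, p j * f j x :=
      Finset.sum_nonneg fun j _ => mul_nonneg (hp.1 j) (hf_nonneg j x)
    have h1 : p i * f i x ≤ ∑ j, p j * f j x :=
      Finset.single_le_sum (fun j _ => mul_nonneg (hp.1 j) (hf_nonneg j x)) (Finset.mem_univ i)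
    have h2 : 0 ≤ post (n + 1) f p i x :=
      div_nonneg (mul_nonneg (hp.1 i) (hf_nonneg i x)) h0
    rw [Real.norm_eq_abs, abs_of_nonneg h2]
    exact div_le_one_of_le₀ h1 h0
  have hpost_int : Integrable (post (n + 1) f p i) (marg ν (n + 1) f p) :=
    (integrable_const (1 : ℝ)).mono' hpost_meas.aestronglyMeasurable
      (Filter.Eventually.of_forall hbdd)
  have hg_int : Integrable g (marg ν (n + 1) f p) := hpost_int.congr hg_eq
  calc (marg ν (n + 1) f p)[post (n + 1) f p i|MeasurableSpace.comap (Tstat (n + 1) f) inferInstance]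
      =ᵐ[marg ν (n + 1) f p] (marg ν (n + 1) f p)[g|MeasurableSpace.comap (Tstat (n + 1) f) inferInstance] := condExp_congr_ae hg_eq
    _ = g := condExp_of_stronglyMeasurable hm hgsm hg_int
    _ =ᵐ[marg ν (n + 1) f p] post (n + 1) f p i := hg_eq.symm
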